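/- Let R be a commutative ring and S, T commutative R-algebras via λ: R → S and μ: R → T (more generally, R-algebras with images of λ, μ central). If the pair (λ, μ) is an exact pair, then the noncommutative tensor product T ⊠_R S coincides with the usual tensor product of R-algebras: the multiplication ∘ satisfies (t₁ ⊗ s₁) ∘ (t₂ ⊗ s₂) = t₁t₂ ⊗ s₁s₂. -/
import Mathlib


open MulOpposite
open scoped TensorProduct

universe u

/-- Tensor product over `R` of a right `R`-module and a left `R`-module. -/
noncomputable abbrev tensorOver (R : Type u) [Ring R] {A B : Type u}
    [AddCommGroup A] [AddCommGroup B]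
    (ract : A → R → A) (lact : R → B → B) : Type u :=
  (TensorProduct ℤ A B) ⧸
    AddSubgroup.closure {x : TensorProduct ℤ A B |
      ∃ (a : A) (r : R) (b : B), x = (ract a r) ⊗ₜ[ℤ] b - a ⊗ₜ[ℤ] (lact r b)}

section
variable {R S T : Type u} [CommRing R] [Ring S] [Ring T]

/-- `S ⊗_R T`. -/
noncomputable abbrev TensST (lam : R →+* S) (mu : R →+* T) : Type u :=
  tensorOver R (fun (s : S) (r : R) => s * lam r) (fun (r : R) (t : T) => mu r * t)

/-- The elementary tensor `s ⊗ t` in `S ⊗_R T`. -/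
noncomputable def eST (lam : R →+* S) (mu : R →+* T) (s : S) (t : T) : TensST lam mu :=
  QuotientAddGroup.mk (s ⊗ₜ[ℤ] t)

/-- `T ⊗_R S`. -/
noncomputable abbrev TensTS (lam : R →+* S) (mu : R →+* T) : Type u :=
  tensorOver R (fun (t : T) (r : R) => t * mu r) (fun (r : R) (s : S) => lam r * s)

/-- The elementary tensor `t ⊗ s` in `T ⊗_R S`. -/
noncomputable def eTS (lam : R →+* S) (mu : R →+* T) (t : T) (s : S) : TensTS lam mu :=
  QuotientAddGroup.mk (t ⊗ₜ[ℤ] s)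

/-- `(λ, μ)` is an exact pair: `(λ, μ, S ⊗_R T, 1 ⊗ 1)` is an exact context. -/
noncomputable def IsExactPair (lam : R →+* S) (mu : R →+* T) : Prop :=
  Function.Injective (fun r : R => (lam r, mu r)) ∧
  (∀ (s : S) (t : T), eST lam mu s 1 = eST lam mu 1 t ↔ ∃ r : R, lam r = s ∧ mu r = t) ∧
  (∀ x : TensST lam mu, ∃ (s : S) (t : T), x = eST lam mu s 1 - eST lam mu 1 t)

/-- Auxiliary bilinear map `s ⊗ t ↦ (t₁ * t) ⊗ (s * s₂)` on the ℤ-tensor products. -/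
noncomputable def phi0 (t₁ : T) (s₂ : S) : TensorProduct ℤ S T →ₗ[ℤ] TensorProduct ℤ T S :=
  (TensorProduct.map (LinearMap.mulLeft ℤ t₁) (LinearMap.mulRight ℤ s₂)).comp
    (TensorProduct.comm ℤ S T).toLinearMap

lemma phi0_tmul (t₁ : T) (s₂ : S) (s : S) (t : T) :
    phi0 t₁ s₂ (s ⊗ₜ[ℤ] t) = (t₁ * t) ⊗ₜ[ℤ] (s * s₂) := rfl

/-- The induced additive map `S ⊗_R T →+ T ⊗_R S`, `s ⊗ t ↦ (t₁ t) ⊗ (s s₂)`. -/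
noncomputable def phi (lam : R →+* S) (mu : R →+* T)
    (hcS : ∀ (r : R) (s : S), lam r * s = s * lam r)
    (hcT : ∀ (r : R) (t : T), mu r * t = t * mu r)
    (t₁ : T) (s₂ : S) : TensST lam mu →+ TensTS lam mu :=
  QuotientAddGroup.lift _
    ((QuotientAddGroup.mk' _).comp (phi0 t₁ s₂).toAddMonoidHom) (by
      intro x hx
      refine (AddSubgroup.closure_le _).mpr ?_ hx
      rintro y ⟨s, r, t, rfl⟩
      simp only [SetLike.mem_coe, AddMonoidHom.mem_ker, AddMonoidHom.coe_comp,
        QuotientAddGroup.coe_mk', LinearMap.toAddMonoidHom_coe, Function.comp_apply,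
        map_sub, phi0_tmul, QuotientAddGroup.mk_sub]
      rw [sub_eq_zero]
      apply Quotient.sound
      apply QuotientAddGroup.leftRel_apply.mpr
      have h1 : s * lam r * s₂ = lam r * (s * s₂) := by
        rw [show s * lam r = lam r * s from (hcS r s).symm, mul_assoc]
      have h2 : t₁ * (mu r * t) = t₁ * t * mu r := by
        rw [hcT r t, ← mul_assoc]
      rw [h1, h2, neg_add_eq_sub]
      exact AddSubgroup.subset_closure ⟨t₁ * t, r, s * s₂, rfl⟩)

lemma phi_eST (lam : R →+* S) (mu : R →+* T)
    (hcS : ∀ (r : R) (s : S), lam r * s = s * lam r)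
    (hcT : ∀ (r : R) (t : T), mu r * t = t * mu r)
    (t₁ : T) (s₂ : S) (s : S) (t : T) :
    phi lam mu hcS hcT t₁ s₂ (eST lam mu s t) = eTS lam mu (t₁ * t) (s * s₂) := rfl

/-- Let `R` be a commutative ring and `S`, `T` be `R`-algebras via
`λ` and `μ` (i.e. the images of `λ`, `μ` are central).  If `(λ, μ)` is an exact pair,
then the multiplication of the noncommutative tensor product `T ⊠_R S` of the exact
context `(λ, μ, S ⊗_R T, 1 ⊗ 1)` coincides with the usual tensor product of
`R`-algebras: `(t₁ ⊗ s₁) ∘ (t₂ ⊗ s₂) = t₁t₂ ⊗ s₁s₂`.  The multiplication `mul` is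
characterized by `(t₁ ⊗ s₁) ∘ (t₂ ⊗ s₂) = t₁(1 ⊗ u + v ⊗ 1)s₂` whenever
`s₁·(1⊗1)·t₂ = u·(1⊗1) + (1⊗1)·v` in `S ⊗_R T`. -/
theorem stmt7 (lam : R →+* S) (mu : R →+* T)
    (hcS : ∀ (r : R) (s : S), lam r * s = s * lam r)
    (hcT : ∀ (r : R) (t : T), mu r * t = t * mu r)
    (hpair : IsExactPair lam mu)
    (mul : TensTS lam mu → TensTS lam mu → TensTS lam mu)
    (hdl : ∀ x y z : TensTS lam mu, mul (x + y) z = mul x z + mul y z)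
    (hdr : ∀ x y z : TensTS lam mu, mul x (y + z) = mul x y + mul x z)
    (hchar : ∀ (t₁ : T) (s₁ : S) (t₂ : T) (s₂ : S) (u : S) (v : T),
        eST lam mu s₁ t₂ = eST lam mu u 1 + eST lam mu 1 v →
        mul (eTS lam mu t₁ s₁) (eTS lam mu t₂ s₂) =
          eTS lam mu t₁ (u * s₂) + eTS lam mu (t₁ * v) s₂) :
    ∀ (t₁ : T) (s₁ : S) (t₂ : T) (s₂ : S),
      mul (eTS lam mu t₁ s₁) (eTS lam mu t₂ s₂) = eTS lam mu (t₁ * t₂) (s₁ * s₂) := by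
  intro t₁ s₁ t₂ s₂
  obtain ⟨u, w, hw⟩ := hpair.2.2 (eST lam mu s₁ t₂)
  have h1 : eST lam mu s₁ t₂ = eST lam mu u 1 + eST lam mu 1 (-w) := by
    rw [hw, sub_eq_add_neg]
    congr 1
    show -(QuotientAddGroup.mk _) = QuotientAddGroup.mk _
    rw [TensorProduct.tmul_neg]
    rfl
  rw [hchar t₁ s₁ t₂ s₂ u (-w) h1]
  have h2 := congrArg (phi lam mu hcS hcT t₁ s₂) h1
  simp only [map_add, phi_eST, mul_one, one_mul] at h2
  rw [← h2]

end
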